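/- If V(x,·) is piecewise linear, concave, continuous, and nondecreasing on [0,1] for each x in the finite set X, then the function F(y) = max_{b∈B(y)} Σ_x V(x, y b(x)) p(x) is also piecewise linear on [0,1]. -/

import Mathlib

open Set

/-- `f : [0,1] → ℝ` is piecewise linear: there is a finite partition
`0 = u₀ < u₁ < … < u_n = 1` such that `f` is affine on each `[u_{i-1}, u_i]`. -/
def IsPiecewiseLinearOn01 (f : ℝ → ℝ) : Prop :=
  ∃ n : ℕ, 0 < n ∧ ∃ u : ℕ → ℝ, u 0 = 0 ∧ u n = 1 ∧ (∀ i < n, u i < u (i + 1)) ∧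
    ∀ i < n, ∃ c d : ℝ, ∀ t ∈ Set.Icc (u i) (u (i + 1)), f t = c * t + d

/-- If each `V(x,·)` is piecewise linear, concave, continuous, nondecreasing on `[0,1]`,
then `F(y) = max_{b ∈ B(y)} Σ_x V(x, y b(x)) p(x)` is also piecewise linear. -/
lemma locate_piece : ∀ (n : ℕ), 0 < n → ∀ (u : ℕ → ℝ) (t : ℝ), u 0 ≤ t → t ≤ u n →
    ∃ j, j < n ∧ u j ≤ t ∧ t ≤ u (j + 1) := by
  intro n
  induction n with
  | zero => intro h; exact absurd h (lt_irrefl 0)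
  | succ m ih =>
    intro _ u t h0 h1
    rcases le_or_gt (u m) t with h | h
    · exact ⟨m, Nat.lt_succ_self m, h, h1⟩
    · rcases Nat.eq_zero_or_pos m with rfl | hm
      · exact absurd h (not_lt.mpr h0)
      · obtain ⟨j, hj, hj1, hj2⟩ := ih hm u t h0 h.le
        exact ⟨j, hj.trans (Nat.lt_succ_self m), hj1, hj2⟩

lemma filter_card_char {n : ℕ} {c : ℕ → ℝ} (hanti : ∀ i j, i ≤ j → j < n → c j ≤ c i)
    (P : ℝ → Prop) [DecidablePred P] (hP : ∀ ⦃s t : ℝ⦄, s ≤ t → P s → P t)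
    {j : ℕ} (hj : j < n) :
    j < ((Finset.range n).filter (fun i => P (c i))).card ↔ P (c j) := by
  constructor
  · intro h
    by_contra hPj
    have hsub : (Finset.range n).filter (fun i => P (c i)) ⊆ Finset.range j := by
      intro i hi
      simp only [Finset.mem_filter, Finset.mem_range] at hi ⊢
      by_contra hij
      exact hPj (hP (hanti j i (by omega) hi.1) hi.2)
    have := Finset.card_le_card hsub
    simp only [Finset.card_range] at this
    omega
  · intro hPj
    have hsub : Finset.range (j + 1) ⊆ (Finset.range n).filter (fun i => P (c i)) := by
      intro i hi
      simp only [Finset.mem_range] at hi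
      simp only [Finset.mem_filter, Finset.mem_range]
      exact ⟨by omega, hP (hanti i j (by omega) hj) hPj⟩
    have := Finset.card_le_card hsub
    simp only [Finset.card_range] at this
    omega

lemma pl_of_cover (f : ℝ → ℝ) {ι : Type*} [Fintype ι] [Nonempty ι]
    (A B : ι → ℝ) (hA : ∀ i, 0 ≤ A i) (hB : ∀ i, B i ≤ 1) (hAB : ∀ i, A i ≤ B i)
    (cover : ∀ y ∈ Icc (0:ℝ) 1, ∃ i, y ∈ Icc (A i) (B i))
    (haff : ∀ i, ∃ c d : ℝ, ∀ t ∈ Icc (A i) (B i), f t = c * t + d) :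
    IsPiecewiseLinearOn01 f := by
  classical
  set E : Finset ℝ := insert 0 (insert 1 (Finset.image A Finset.univ ∪ Finset.image B Finset.univ)) with hE
  have hE01 : ∀ v ∈ E, 0 ≤ v ∧ v ≤ 1 := by
    intro v hv
    simp only [hE, Finset.mem_insert, Finset.mem_union, Finset.mem_image, Finset.mem_univ,
      true_and] at hv
    rcases hv with rfl | rfl | ⟨i, rfl⟩ | ⟨i, rfl⟩
    · exact ⟨le_refl 0, zero_le_one⟩
    · exact ⟨zero_le_one, le_refl 1⟩
    · exact ⟨hA i, (hAB i).trans (hB i)⟩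
    · exact ⟨(hA i).trans (hAB i), hB i⟩
  have h0E : (0:ℝ) ∈ E := by simp [hE]
  have h1E : (1:ℝ) ∈ E := by simp [hE]
  set m := E.card with hm
  have hm2 : 2 ≤ m := by
    rw [hm]
    exact Finset.one_lt_card.mpr ⟨0, h0E, 1, h1E, by norm_num⟩
  set e := E.orderIsoOfFin (rfl : E.card = m) with he
  set u : ℕ → ℝ := fun i => if h : i < m then (e ⟨i, h⟩ : ℝ) else 1 with hu
  have humem : ∀ i (h : i < m), (u i) ∈ E := by
    intro i h; simp only [hu, dif_pos h]; exact (e ⟨i, h⟩).2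
  have hustrict : ∀ i j (hi : i < m) (hj : j < m), i < j → u i < u j := by
    intro i j hi hj hij
    simp only [hu, dif_pos hi, dif_pos hj]
    exact_mod_cast e.strictMono (show (⟨i, hi⟩ : Fin m) < ⟨j, hj⟩ from hij)
  have husurj : ∀ v ∈ E, ∃ i, ∃ h : i < m, u i = v := by
    intro v hv
    refine ⟨(e.symm ⟨v, hv⟩ : Fin m), (e.symm ⟨v, hv⟩).2, ?_⟩
    simp only [hu, dif_pos (e.symm ⟨v, hv⟩).2]
    have : e (e.symm ⟨v, hv⟩) = ⟨v, hv⟩ := e.apply_symm_apply _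
    rw [dif_pos (show ((e.symm ⟨v, hv⟩ : Fin m) : ℕ) < m from (e.symm ⟨v, hv⟩).2), Fin.eta, this]
  have hu0 : u 0 = 0 := by
    obtain ⟨i, hi, hiv⟩ := husurj 0 h0E
    have h0m : 0 < m := by omega
    have hle : u 0 ≤ u i := by
      rcases Nat.eq_zero_or_pos i with rfl | hpos
      · exact le_refl _
      · exact (hustrict 0 i h0m hi hpos).le
    have := (hE01 _ (humem 0 h0m)).1
    rw [hiv] at hle
    linarith
  have hun : u (m - 1) = 1 := by
    obtain ⟨i, hi, hiv⟩ := husurj 1 h1E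
    have hm1 : m - 1 < m := by omega
    have hle : u i ≤ u (m - 1) := by
      rcases Nat.eq_or_lt_of_le (Nat.le_pred_of_lt hi) with h | h
      · rw [h, Nat.pred_eq_sub_one]
      · exact (hustrict i (m-1) hi hm1 h).le
    have := (hE01 _ (humem (m-1) hm1)).2
    rw [hiv] at hle
    linarith
  refine ⟨m - 1, by omega, u, hu0, hun, ?_, ?_⟩
  · intro i hi
    exact hustrict i (i+1) (by omega) (by omega) (Nat.lt_succ_self i)
  · intro i hi
    -- midpoint
    set t0 := (u i + u (i+1)) / 2 with ht0
    have hui : u i < u (i+1) := hustrict i (i+1) (by omega) (by omega) (Nat.lt_succ_self i)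
    have ht0mem : t0 ∈ Icc (u i) (u (i+1)) := ⟨by rw [ht0]; linarith, by rw [ht0]; linarith⟩
    have ht01 : t0 ∈ Icc (0:ℝ) 1 := by
      have h1 := (hE01 _ (humem i (by omega))).1
      have h2 := (hE01 _ (humem (i+1) (by omega))).2
      exact ⟨le_trans h1 ht0mem.1, le_trans ht0mem.2 h2⟩
    obtain ⟨k, hk⟩ := cover t0 ht01
    -- A k ≤ u i  and  u (i+1) ≤ B k
    have hmemA : A k ∈ E := by
      simp only [hE, Finset.mem_insert, Finset.mem_union, Finset.mem_image, Finset.mem_univ,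
        true_and]
      exact Or.inr (Or.inr (Or.inl ⟨k, rfl⟩))
    have hmemB : B k ∈ E := by
      simp only [hE, Finset.mem_insert, Finset.mem_union, Finset.mem_image, Finset.mem_univ,
        true_and]
      exact Or.inr (Or.inr (Or.inr ⟨k, rfl⟩))
    have hAle : A k ≤ u i := by
      obtain ⟨j, hj, hjv⟩ := husurj _ hmemA
      rw [← hjv]
      have hjle : j ≤ i := by
        by_contra hcon
        have : u (i+1) ≤ u j := by
          rcases Nat.eq_or_lt_of_le (show i+1 ≤ j by omega) with h | h
          · rw [h]
          · exact (hustrict (i+1) j (by omega) hj h).le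
        have : u (i+1) ≤ t0 := le_trans ‹u (i+1) ≤ u j› (le_of_le_of_eq (le_of_eq hjv) rfl |>.trans hk.1)
        rw [ht0] at this; linarith
      rcases Nat.eq_or_lt_of_le hjle with h | h
      · rw [h]
      · exact (hustrict j i hj (by omega) h).le
    have hBge : u (i+1) ≤ B k := by
      obtain ⟨j, hj, hjv⟩ := husurj _ hmemB
      rw [← hjv]
      have hjge : i + 1 ≤ j := by
        by_contra hcon
        have hle : u j ≤ u i := by
          rcases Nat.eq_or_lt_of_le (show j ≤ i by omega) with h | h
          · rw [h]
          · exact (hustrict j i hj (by omega) h).le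
        have : t0 ≤ u i := le_trans (hjv ▸ hk.2) hle
        rw [ht0] at this; linarith
      rcases Nat.eq_or_lt_of_le hjge with h | h
      · rw [← h]
      · exact (hustrict (i+1) j (by omega) hj h).le
    obtain ⟨cc, dd, hcd⟩ := haff k
    exact ⟨cc, dd, fun t ht => hcd t ⟨le_trans hAle ht.1, le_trans ht.2 hBge⟩⟩


theorem F_piecewise_linear {X : Type*} [Fintype X] [Nonempty X]
    (p : X → ℝ) (hp0 : ∀ x, 0 ≤ p x) (hp1 : (∑ x, p x) = 1)
    (V : X → ℝ → ℝ)
    (hmono : ∀ x, MonotoneOn (V x) (Set.Icc 0 1))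
    (hcont : ∀ x, ContinuousOn (V x) (Set.Icc 0 1))
    (hconc : ∀ x, ConcaveOn ℝ (Set.Icc 0 1) (V x))
    (hPL : ∀ x, IsPiecewiseLinearOn01 (V x))
    (F : ℝ → ℝ)
    (hF : ∀ y ∈ Set.Icc (0 : ℝ) 1, F y = sSup {r : ℝ | ∃ b : X → ℝ,
      (∑ x, p x * b x) = 1 ∧ (∀ x, 0 ≤ y * b x ∧ y * b x ≤ 1) ∧
      r = ∑ x, V x (y * b x) * p x}) :
    IsPiecewiseLinearOn01 F := by
  classical
  choose n hn u hu0 hu1 huinc hpieces using hPL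
  have hpieces' : ∀ x i, ∃ c d : ℝ, i < n x → ∀ t ∈ Icc (u x i) (u x (i+1)), V x t = c * t + d := by
    intro x i
    by_cases h : i < n x
    · obtain ⟨c, d, hcd⟩ := hpieces x i h
      exact ⟨c, d, fun _ => hcd⟩
    · exact ⟨0, 0, fun h' => absurd h' h⟩
  choose c d hcd using hpieces'
  -- monotonicity of breakpoints
  have humono : ∀ x ⦃i j : ℕ⦄, i ≤ j → j ≤ n x → u x i ≤ u x j := by
    intro x i j hij hjn
    induction j with
    | zero => simp only [Nat.le_zero] at hij; rw [hij]
    | succ k ih =>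
      rcases Nat.eq_or_lt_of_le hij with rfl | h
      · exact le_refl _
      · exact (ih (Nat.lt_succ_iff.mp h) (by omega)).trans (huinc x k (by omega)).le
  have hu_nonneg : ∀ x i, i ≤ n x → 0 ≤ u x i := fun x i h =>
    (hu0 x) ▸ humono x (Nat.zero_le i) h
  have hu_le1 : ∀ x i, i ≤ n x → u x i ≤ 1 := fun x i h => (hu1 x) ▸ humono x h (le_refl _)
  have hu_mem : ∀ x i, i ≤ n x → u x i ∈ Icc (0:ℝ) 1 := fun x i h =>
    ⟨hu_nonneg x i h, hu_le1 x i h⟩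
  -- values at breakpoints
  have hVleft : ∀ x i, i < n x → V x (u x i) = c x i * u x i + d x i := fun x i h =>
    hcd x i h _ ⟨le_refl _, (huinc x i h).le⟩
  have hVright : ∀ x i, i < n x → V x (u x (i+1)) = c x i * u x (i+1) + d x i := fun x i h =>
    hcd x i h _ ⟨(huinc x i h).le, le_refl _⟩
  -- slopes are nonnegative
  have hc0 : ∀ x i, i < n x → 0 ≤ c x i := by
    intro x i h
    have h1 := hmono x (hu_mem x i (by omega)) (hu_mem x (i+1) (by omega)) (huinc x i h).le
    rw [hVleft x i h, hVright x i h] at h1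
    have h2 := huinc x i h
    nlinarith
  -- slopes are antitone
  have hcanti : ∀ x i j, i ≤ j → j < n x → c x j ≤ c x i := by
    intro x i j hij hjn
    induction j with
    | zero => simp only [Nat.le_zero] at hij; rw [hij]
    | succ k ih =>
      rcases Nat.eq_or_lt_of_le hij with rfl | h
      · exact le_refl _
      · have hik : i ≤ k := Nat.lt_succ_iff.mp h
        refine le_trans ?_ (ih hik (by omega))
        -- adjacent: c x (k+1) ≤ c x k
        have hs := (hconc x).slope_anti_adjacent (hu_mem x k (by omega))
          (hu_mem x (k+2) (by omega)) (huinc x k (by omega)) (huinc x (k+1) (by omega))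
        have hVr2 := hVright x (k+1) (by omega)
        rw [show k+1+1 = k+2 by omega] at hVr2
        have hVl2 := hVleft x (k+1) (by omega)
        rw [hVr2, hVl2, hVleft x k (by omega)] at hs
        have heq : c x (k+1) * u x (k+1) + d x (k+1) = c x k * u x (k+1) + d x k := by
          rw [← hVl2, hVright x k (by omega)]
        have e1 : u x k < u x (k+1) := huinc x k (by omega)
        have e2 : u x (k+1) < u x (k+2) := huinc x (k+1) (by omega)
        rw [div_le_div_iff₀ (by linarith) (by linarith)] at hs
        nlinarith [hs, heq, mul_pos (sub_pos.mpr e1) (sub_pos.mpr e2)]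
  -- the argmax indices
  set afun : X → ℝ → ℕ := fun x lam => ((Finset.range (n x)).filter (fun j => lam < c x j)).card
    with hafun
  set bfun : X → ℝ → ℕ := fun x lam => ((Finset.range (n x)).filter (fun j => lam ≤ c x j)).card
    with hbfun
  have hachar : ∀ x (lam : ℝ) j, j < n x → (j < afun x lam ↔ lam < c x j) := by
    intro x lam j hj
    exact filter_card_char (fun i j hij hjn => hcanti x i j hij hjn) (fun t => lam < t)
      (fun s t hst h => lt_of_lt_of_le h hst) hj
  have hbchar : ∀ x (lam : ℝ) j, j < n x → (j < bfun x lam ↔ lam ≤ c x j) := by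
    intro x lam j hj
    exact filter_card_char (fun i j hij hjn => hcanti x i j hij hjn) (fun t => lam ≤ t)
      (fun s t hst h => le_trans h hst) hj
  have hble : ∀ x (lam : ℝ), bfun x lam ≤ n x := by
    intro x lam
    calc bfun x lam ≤ (Finset.range (n x)).card := Finset.card_filter_le _ _
    _ = n x := Finset.card_range _
  have hale : ∀ x (lam : ℝ), afun x lam ≤ n x := by
    intro x lam
    calc afun x lam ≤ (Finset.range (n x)).card := Finset.card_filter_le _ _
    _ = n x := Finset.card_range _
  have hab : ∀ x (lam : ℝ), afun x lam ≤ bfun x lam := by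
    intro x lam
    apply Finset.card_le_card
    intro j hj
    simp only [Finset.mem_filter] at hj ⊢
    exact ⟨hj.1, hj.2.le⟩
  -- maximality of u x (bfun x lam)
  have hmax : ∀ x (lam : ℝ), ∀ t ∈ Icc (0:ℝ) 1,
      V x t - lam * t ≤ V x (u x (bfun x lam)) - lam * u x (bfun x lam) := by
    intro x lam t ht
    set b := bfun x lam with hb
    have hbn : b ≤ n x := hble x lam
    -- chains
    have step_up : ∀ j, j < b → V x (u x j) - lam * u x j ≤ V x (u x (j+1)) - lam * u x (j+1) := by
      intro j hjb
      have hjn : j < n x := lt_of_lt_of_le hjb hbn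
      have hlam : lam ≤ c x j := (hbchar x lam j hjn).mp hjb
      rw [hVleft x j hjn, hVright x j hjn]
      nlinarith [(huinc x j hjn).le, sub_nonneg.mpr hlam, sub_nonneg.mpr (huinc x j hjn).le,
        mul_nonneg (sub_nonneg.mpr hlam) (sub_nonneg.mpr (huinc x j hjn).le)]
    have step_down : ∀ j, b ≤ j → j < n x →
        V x (u x (j+1)) - lam * u x (j+1) ≤ V x (u x j) - lam * u x j := by
      intro j hbj hjn
      have hlam : c x j < lam := by
        by_contra hcon
        exact absurd ((hbchar x lam j hjn).mpr (not_lt.mp hcon)) (by omega)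
      rw [hVleft x j hjn, hVright x j hjn]
      nlinarith [mul_nonneg (sub_nonneg.mpr hlam.le) (sub_nonneg.mpr (huinc x j hjn).le)]
    have chain_up : ∀ j, j ≤ b → ∀ k, k ≤ j → V x (u x k) - lam * u x k ≤ V x (u x j) - lam * u x j := by
      intro j
      induction j with
      | zero => intro _ k hk; simp only [Nat.le_zero] at hk; rw [hk]
      | succ m ih =>
        intro hjb k hk
        rcases Nat.eq_or_lt_of_le hk with rfl | h
        · exact le_refl _
        · exact le_trans (ih (by omega) k (by omega)) (step_up m (by omega))
    have chain_down : ∀ j, b ≤ j → j ≤ n x → V x (u x j) - lam * u x j ≤ V x (u x b) - lam * u x b := by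
      intro j
      induction j with
      | zero => intro hbj _; simp only [Nat.le_zero] at hbj; rw [hbj]
      | succ m ih =>
        intro hbj hjn
        rcases Nat.eq_or_lt_of_le hbj with heq | h
        · rw [heq]
        · exact le_trans (step_down m (by omega) (by omega)) (ih (by omega) (by omega))
    -- locate t
    obtain ⟨j, hjn, hj1, hj2⟩ := locate_piece (n x) (hn x) (u x) t
      (by rw [hu0 x]; exact ht.1) (by rw [hu1 x]; exact ht.2)
    have hvt : V x t = c x j * t + d x j := hcd x j hjn t ⟨hj1, hj2⟩
    rcases le_or_gt lam (c x j) with hl | hl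
    · -- j < b, go up to u (j+1) then chain
      have hjb : j < b := (hbchar x lam j hjn).mpr hl
      have h1 : V x t - lam * t ≤ V x (u x (j+1)) - lam * u x (j+1) := by
        rw [hvt, hVright x j hjn]
        nlinarith [mul_nonneg (sub_nonneg.mpr hl) (sub_nonneg.mpr hj2)]
      exact le_trans h1 (chain_up b (le_refl _) (j+1) (by omega))
    · -- b ≤ j, go down to u j then chain
      have hjb : b ≤ j := by
        by_contra hcon
        exact absurd ((hbchar x lam j hjn).mp (by omega)) (not_le.mpr hl)
      have h1 : V x t - lam * t ≤ V x (u x j) - lam * u x j := by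
        rw [hvt, hVleft x j hjn]
        nlinarith [mul_nonneg (sub_nonneg.mpr hl.le) (sub_nonneg.mpr hj1)]
      exact le_trans h1 (chain_down j hjb (by omega))
  -- constancy on [u (afun), u (bfun)]
  have hconst : ∀ x (lam : ℝ), ∀ t ∈ Icc (u x (afun x lam)) (u x (bfun x lam)),
      V x t - lam * t = V x (u x (bfun x lam)) - lam * u x (bfun x lam) := by
    intro x lam t ht
    set a := afun x lam with ha
    set b := bfun x lam with hb
    have han : a ≤ n x := hale x lam
    have hbn : b ≤ n x := hble x lam
    have hab' : a ≤ b := hab x lam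
    have hceq : ∀ j, a ≤ j → j < b → c x j = lam := by
      intro j haj hjb
      have hjn : j < n x := lt_of_lt_of_le hjb hbn
      have h1 : lam ≤ c x j := (hbchar x lam j hjn).mp hjb
      have h2 : ¬ lam < c x j := fun hcon => absurd ((hachar x lam j hjn).mpr hcon) (by omega)
      linarith [not_lt.mp h2]
    have hchain : ∀ j, a ≤ j → j ≤ b → V x (u x j) - lam * u x j = V x (u x a) - lam * u x a := by
      intro j
      induction j with
      | zero => intro haj _; simp only [Nat.le_zero] at haj; rw [haj]
      | succ m ih =>
        intro haj hjb
        rcases Nat.eq_or_lt_of_le haj with heq | h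
        · rw [heq]
        · have ham : a ≤ m := by omega
          have hmb : m < b := by omega
          have hmn : m < n x := lt_of_lt_of_le hmb hbn
          have hc : c x m = lam := hceq m ham hmb
          have : V x (u x (m+1)) - lam * u x (m+1) = V x (u x m) - lam * u x m := by
            rw [hVleft x m hmn, hVright x m hmn, hc]; ring
          rw [this]
          exact ih ham (by omega)
    rcases Nat.eq_or_lt_of_le hab' with heqab | hltab
    · -- degenerate: t = u a = u b
      rw [heqab] at ht
      have : t = u x b := le_antisymm ht.2 ht.1
      rw [this]
    · -- locate t in [u a, u b]
      obtain ⟨j', hj', hj1, hj2⟩ := locate_piece (b - a) (by omega) (fun i => u x (a + i)) t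
        (by simpa using ht.1) (by
          have : a + (b - a) = b := by omega
          simpa [this] using ht.2)
      set j := a + j' with hj
      have hjb : j < b := by omega
      have hjn : j < n x := lt_of_lt_of_le hjb hbn
      have hj2' : t ≤ u x (j + 1) := by simpa [hj, Nat.add_assoc] using hj2
      have hvt : V x t = c x j * t + d x j := hcd x j hjn t ⟨hj1, hj2'⟩
      have hc : c x j = lam := hceq j (by omega) hjb
      have h1 : V x t - lam * t = V x (u x j) - lam * u x j := by
        rw [hvt, hVleft x j hjn, hc]; ring
      rw [h1, hchain j (by omega) hjb.le, ← hchain b (by omega) (le_refl _)]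
  -- basic bounds on the interval endpoints
  have hLnonneg : ∀ lam : ℝ, 0 ≤ ∑ x, p x * u x (afun x lam) := by
    intro lam
    exact Finset.sum_nonneg fun x _ => mul_nonneg (hp0 x) (hu_nonneg x _ (hale x lam))
  have hRle1 : ∀ lam : ℝ, (∑ x, p x * u x (bfun x lam)) ≤ 1 := by
    intro lam
    calc (∑ x, p x * u x (bfun x lam)) ≤ ∑ x, p x * 1 :=
          Finset.sum_le_sum fun x _ => mul_le_mul_of_nonneg_left (hu_le1 x _ (hble x lam)) (hp0 x)
    _ = 1 := by simp [hp1]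
  have hLR : ∀ lam : ℝ, (∑ x, p x * u x (afun x lam)) ≤ ∑ x, p x * u x (bfun x lam) := by
    intro lam
    exact Finset.sum_le_sum fun x _ =>
      mul_le_mul_of_nonneg_left (humono x (hab x lam) (hble x lam)) (hp0 x)
  -- the key affine formula
  have key : ∀ (lam : ℝ) (y : ℝ), (∑ x, p x * u x (afun x lam)) ≤ y →
      y ≤ (∑ x, p x * u x (bfun x lam)) →
      F y = lam * y + ∑ x, (V x (u x (bfun x lam)) - lam * u x (bfun x lam)) * p x := by
    intro lam y hLy hyR
    have hy0 : 0 ≤ y := le_trans (hLnonneg lam) hLy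
    have hy1 : y ≤ 1 := le_trans hyR (hRle1 lam)
    set Lv := ∑ x, p x * u x (afun x lam) with hLv
    set Rv := ∑ x, p x * u x (bfun x lam) with hRv
    set β := ∑ x, (V x (u x (bfun x lam)) - lam * u x (bfun x lam)) * p x with hβ
    -- construct the optimal point
    set θ : ℝ := if Rv ≤ Lv then 0 else (y - Lv) / (Rv - Lv) with hθ
    have hθ0 : 0 ≤ θ := by
      rw [hθ]
      split_ifs with h
      · exact le_refl 0
      · exact div_nonneg (by linarith) (by push_neg at h; linarith)
    have hθ1 : θ ≤ 1 := by
      rw [hθ]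
      split_ifs with h
      · exact zero_le_one
      · push_neg at h
        rw [div_le_one (by linarith)]
        linarith
    set t : X → ℝ := fun x => u x (afun x lam) + θ * (u x (bfun x lam) - u x (afun x lam))
      with htdef
    have htab : ∀ x, t x ∈ Icc (u x (afun x lam)) (u x (bfun x lam)) := by
      intro x
      have hd : 0 ≤ u x (bfun x lam) - u x (afun x lam) :=
        sub_nonneg.mpr (humono x (hab x lam) (hble x lam))
      constructor
      · simp only [htdef]
        nlinarith
      · simp only [htdef]
        nlinarith
    have ht01 : ∀ x, t x ∈ Icc (0:ℝ) 1 := by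
      intro x
      exact ⟨le_trans (hu_nonneg x _ (hale x lam)) (htab x).1,
        le_trans (htab x).2 (hu_le1 x _ (hble x lam))⟩
    have hsum_t : ∑ x, p x * t x = y := by
      have hpt : ∀ x, p x * t x =
          p x * u x (afun x lam) + θ * (p x * u x (bfun x lam) - p x * u x (afun x lam)) := by
        intro x; simp only [htdef]; ring
      rw [Finset.sum_congr rfl fun x _ => hpt x, Finset.sum_add_distrib, ← Finset.mul_sum,
        Finset.sum_sub_distrib, ← hLv, ← hRv]
      rw [hθ]
      split_ifs with h
      · have h1 : Rv = Lv := le_antisymm h (hLR lam)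
        rw [h1] at hyR
        linarith [le_antisymm hyR hLy]
      · push_neg at h
        have hne : Rv - Lv ≠ 0 := by linarith
        field_simp
        ring
    have hval : ∑ x, V x (t x) * p x = lam * y + β := by
      have hpt : ∀ x, V x (t x) * p x =
          (V x (u x (bfun x lam)) - lam * u x (bfun x lam)) * p x + lam * (p x * t x) := by
        intro x
        have h0 := hconst x lam (t x) (htab x)
        have h2 : V x (t x) = (V x (u x (bfun x lam)) - lam * u x (bfun x lam)) + lam * t x := by
          linarith
        rw [h2]; ring
      rw [Finset.sum_congr rfl fun x _ => hpt x, Finset.sum_add_distrib, ← Finset.mul_sum,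
        hsum_t, ← hβ]
      ring
    -- the upper bound
    have hub : ∀ r ∈ {r : ℝ | ∃ b : X → ℝ, (∑ x, p x * b x) = 1 ∧
        (∀ x, 0 ≤ y * b x ∧ y * b x ≤ 1) ∧ r = ∑ x, V x (y * b x) * p x}, r ≤ lam * y + β := by
      rintro r ⟨b, hb1, hb2, rfl⟩
      have hptw : ∀ x, V x (y * b x) * p x ≤
          (V x (u x (bfun x lam)) - lam * u x (bfun x lam)) * p x + lam * (y * b x) * p x := by
        intro x
        have h1 := hmax x lam (y * b x) ⟨(hb2 x).1, (hb2 x).2⟩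
        nlinarith [mul_le_mul_of_nonneg_right (show V x (y * b x) ≤
          (V x (u x (bfun x lam)) - lam * u x (bfun x lam)) + lam * (y * b x) by linarith) (hp0 x)]
      calc (∑ x, V x (y * b x) * p x)
          ≤ ∑ x, ((V x (u x (bfun x lam)) - lam * u x (bfun x lam)) * p x + lam * (y * b x) * p x) :=
            Finset.sum_le_sum fun x _ => hptw x
      _ = β + lam * y * ∑ x, p x * b x := by
            rw [Finset.sum_add_distrib, ← hβ]
            congr 1
            have hx : ∀ x : X, lam * (y * b x) * p x = lam * y * (p x * b x) := fun x => by ring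
            rw [Finset.sum_congr rfl fun x _ => hx x, ← Finset.mul_sum]
      _ = lam * y + β := by rw [hb1]; ring
    -- membership
    have hmem : (lam * y + β) ∈ {r : ℝ | ∃ b : X → ℝ, (∑ x, p x * b x) = 1 ∧
        (∀ x, 0 ≤ y * b x ∧ y * b x ≤ 1) ∧ r = ∑ x, V x (y * b x) * p x} := by
      rcases eq_or_lt_of_le hy0 with hy | hy
      · -- y = 0
        refine ⟨fun _ => 1, by simpa using hp1, fun x => by rw [← hy]; norm_num, ?_⟩
        have hzero : ∀ x, p x * t x = 0 := by
          have hsum0 : ∑ x, p x * t x = 0 := by rw [hsum_t, ← hy]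
          have hnn : ∀ x ∈ Finset.univ, 0 ≤ p x * t x := fun x _ =>
            mul_nonneg (hp0 x) (ht01 x).1
          intro x
          exact (Finset.sum_eq_zero_iff_of_nonneg hnn).mp hsum0 x (Finset.mem_univ x)
        have : ∀ x, V x (y * 1) * p x = V x (t x) * p x := by
          intro x
          rcases eq_or_lt_of_le (hp0 x) with hpx | hpx
          · rw [← hpx]; ring
          · have htx : t x = 0 := by
              have := hzero x
              nlinarith
            rw [htx, ← hy]; norm_num
        rw [Finset.sum_congr rfl fun x _ => this x, hval]
      · -- y > 0
        refine ⟨fun x => t x / y, ?_, ?_, ?_⟩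
        · have : ∀ x, p x * (t x / y) = (p x * t x) / y := fun x => by ring
          rw [Finset.sum_congr rfl fun x _ => this x, ← Finset.sum_div, hsum_t,
            div_self (ne_of_gt hy)]
        · intro x
          rw [mul_div_cancel₀ _ (ne_of_gt hy)]
          exact ⟨(ht01 x).1, (ht01 x).2⟩
        · rw [Finset.sum_congr rfl fun x _ => by rw [mul_div_cancel₀ _ (ne_of_gt hy)], hval]
    rw [hF y ⟨hy0, hy1⟩]
    exact le_antisymm (csSup_le ⟨_, hmem⟩ hub) (le_csSup ⟨_, hub⟩ hmem)
  -- the finite set of slopes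
  set Λ : Finset ℝ := Finset.univ.biUnion (fun x => (Finset.range (n x)).image (c x)) with hΛ
  have hmemc : ∀ x j, j < n x → c x j ∈ Λ := by
    intro x j hj
    rw [hΛ]
    exact Finset.mem_biUnion.mpr ⟨x, Finset.mem_univ x,
      Finset.mem_image.mpr ⟨j, Finset.mem_range.mpr hj, rfl⟩⟩
  have hΛmem : ∀ μ ∈ Λ, ∃ x, ∃ j, j < n x ∧ c x j = μ := by
    intro μ hμ
    rw [hΛ] at hμ
    obtain ⟨x, _, hx⟩ := Finset.mem_biUnion.mp hμ
    obtain ⟨j, hj, hjv⟩ := Finset.mem_image.mp hx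
    exact ⟨x, j, Finset.mem_range.mp hj, hjv⟩
  obtain ⟨x₀⟩ := ‹Nonempty X›
  have hΛne : Λ.Nonempty := ⟨c x₀ 0, hmemc x₀ 0 (hn x₀)⟩
  -- covering
  have hcover : ∀ y ∈ Icc (0:ℝ) 1, ∃ lam ∈ Λ,
      (∑ x, p x * u x (afun x lam)) ≤ y ∧ y ≤ ∑ x, p x * u x (bfun x lam) := by
    intro y hy
    set T := Λ.filter (fun μ => (∑ x, p x * u x (afun x μ)) ≤ y) with hT
    have hTne : T.Nonempty := by
      refine ⟨Λ.max' hΛne, Finset.mem_filter.mpr ⟨Λ.max'_mem hΛne, ?_⟩⟩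
      have haz : ∀ x, afun x (Λ.max' hΛne) = 0 := by
        intro x
        simp only [hafun]
        rw [Finset.card_eq_zero, Finset.filter_eq_empty_iff]
        intro j hj
        rw [Finset.mem_range] at hj
        exact not_lt.mpr (Finset.le_max' Λ _ (hmemc x j hj))
      have : (∑ x, p x * u x (afun x (Λ.max' hΛne))) = 0 := by
        rw [Finset.sum_eq_zero]
        intro x _
        rw [haz x, hu0 x, mul_zero]
      rw [this]
      exact hy.1
    set lam := T.min' hTne with hlam
    have hlamT : lam ∈ T := T.min'_mem hTne
    have hlamΛ : lam ∈ Λ := Finset.mem_filter.mp hlamT |>.1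
    have hLy : (∑ x, p x * u x (afun x lam)) ≤ y := (Finset.mem_filter.mp hlamT).2
    refine ⟨lam, hlamΛ, hLy, ?_⟩
    by_contra hyR
    push_neg at hyR
    by_cases hex : ∃ μ ∈ Λ, μ < lam
    · -- take the next smaller slope
      obtain ⟨μ₀, hμ₀Λ, hμ₀⟩ := hex
      set T' := Λ.filter (fun μ => μ < lam) with hT'
      have hT'ne : T'.Nonempty := ⟨μ₀, Finset.mem_filter.mpr ⟨hμ₀Λ, hμ₀⟩⟩
      set lam' := T'.max' hT'ne with hlam'
      have hlam'T' : lam' ∈ T' := T'.max'_mem hT'ne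
      have hlam'Λ : lam' ∈ Λ := (Finset.mem_filter.mp hlam'T').1
      have hlam'lt : lam' < lam := (Finset.mem_filter.mp hlam'T').2
      have heqab : ∀ x, afun x lam' = bfun x lam := by
        intro x
        simp only [hafun, hbfun]
        congr 1
        apply Finset.filter_congr
        intro j hj
        rw [Finset.mem_range] at hj
        constructor
        · intro h
          by_contra hcon
          push_neg at hcon
          have hcT' : c x j ∈ T' := Finset.mem_filter.mpr ⟨hmemc x j hj, hcon⟩
          exact absurd (Finset.le_max' T' _ hcT') (not_le.mpr h)
        · intro h
          exact lt_of_lt_of_le hlam'lt h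
      have hL' : (∑ x, p x * u x (afun x lam')) ≤ y := by
        have : (∑ x, p x * u x (afun x lam')) = ∑ x, p x * u x (bfun x lam) := by
          exact Finset.sum_congr rfl fun x _ => by rw [heqab x]
        rw [this]
        exact hyR.le
      have hlam'T : lam' ∈ T := Finset.mem_filter.mpr ⟨hlam'Λ, hL'⟩
      exact absurd (T.min'_le _ hlam'T) (not_le.mpr hlam'lt)
    · -- lam is the minimum of Λ
      push_neg at hex
      have hbn : ∀ x, bfun x lam = n x := by
        intro x
        simp only [hbfun]
        have : (Finset.range (n x)).filter (fun j => lam ≤ c x j) = Finset.range (n x) := by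
          apply Finset.filter_true_of_mem
          intro j hj
          rw [Finset.mem_range] at hj
          exact hex _ (hmemc x j hj)
        rw [this, Finset.card_range]
      have : (∑ x, p x * u x (bfun x lam)) = 1 := by
        have h1 : (∑ x, p x * u x (bfun x lam)) = ∑ x, p x := by
          apply Finset.sum_congr rfl
          intro x _
          rw [hbn x, hu1 x, mul_one]
        rw [h1, hp1]
      rw [this] at hyR
      exact absurd hy.2 (not_le.mpr hyR)
  -- assemble
  have hNe : Nonempty {μ // μ ∈ Λ} := ⟨⟨_, hΛne.choose_spec⟩⟩
  exact pl_of_cover F (ι := {μ // μ ∈ Λ})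
    (fun i => ∑ x, p x * u x (afun x i.1))
    (fun i => ∑ x, p x * u x (bfun x i.1))
    (fun i => hLnonneg i.1)
    (fun i => hRle1 i.1)
    (fun i => hLR i.1)
    (fun y hy => by
      obtain ⟨lam, hlamΛ, h1, h2⟩ := hcover y hy
      exact ⟨⟨lam, hlamΛ⟩, h1, h2⟩)
    (fun i => ⟨i.1, ∑ x, (V x (u x (bfun x i.1)) - i.1 * u x (bfun x i.1)) * p x,
      fun t ht => key i.1 t ht.1 ht.2⟩)
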